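/- Let r ≥ 5 be an odd integer and A = exp(2πi/(4r)). Set μ = (2/√r)·sin(π/r) and let x = μ · |(A^(−4) − A^(2(r−1))) · i^(r(r−1)/2) · √r| / |A² − A^(−2)|². Then x = cos(π/(2r)) / sin(π/r). -/

import Mathlib

open Complex in
private lemma exp_add_exp_neg (t : ℝ) :
    Complex.exp ((t:ℂ) * I) + Complex.exp ((-t:ℝ) * I) = 2 * (Real.cos t : ℂ) := by
  rw [Complex.exp_mul_I, Complex.exp_mul_I]
  push_cast
  rw [Complex.cos_neg, Complex.sin_neg, ← Complex.ofReal_cos]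
  ring

open Complex in
private lemma exp_sub_exp_neg (t : ℝ) :
    Complex.exp ((t:ℂ) * I) - Complex.exp ((-t:ℝ) * I) = 2 * I * (Real.sin t : ℂ) := by
  rw [Complex.exp_mul_I, Complex.exp_mul_I]
  push_cast
  rw [Complex.cos_neg, Complex.sin_neg, ← Complex.ofReal_sin]
  ring

theorem stmt5 (r : ℕ) (hr : 5 ≤ r) (hodd : Odd r)
    (A : ℂ) (hA : A = Complex.exp (2 * Real.pi * Complex.I / (4 * r)))
    (μ : ℝ) (hμ : μ = (2 / Real.sqrt r) * Real.sin (Real.pi / r))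
    (x : ℝ)
    (hx : x = μ * ‖(A ^ (-4 : ℤ) - A ^ (2 * (r - 1))) *
            Complex.I ^ (r * (r - 1) / 2) * (Real.sqrt r : ℂ)‖
          / ‖A ^ 2 - A ^ (-2 : ℤ)‖ ^ 2) :
    x = Real.cos (Real.pi / (2 * r)) / Real.sin (Real.pi / r) := by
  have hr5 : (5:ℝ) ≤ r := by exact_mod_cast hr
  have hr0 : (0:ℝ) < r := by positivity
  have hrC : (r:ℂ) ≠ 0 := by exact_mod_cast hr0.ne'
  set t : ℝ := Real.pi / (2 * r) with ht
  have ht0 : 0 < t := by positivity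
  have htlt : t < Real.pi / 2 := by
    rw [ht, div_lt_div_iff₀ (by positivity) two_pos]
    nlinarith [Real.pi_pos, hr5]
  have hAe : A = Complex.exp ((t:ℂ) * Complex.I) := by
    rw [hA, ht]
    congr 1
    push_cast
    field_simp
    ring
  have hpow : ∀ n : ℤ, A ^ n = Complex.exp (((n * t : ℝ) : ℂ) * Complex.I) := by
    intro n
    rw [hAe, ← Complex.exp_int_mul]
    congr 1
    push_cast; ring
  have hpown : ∀ n : ℕ, A ^ n = Complex.exp (((n * t : ℝ) : ℂ) * Complex.I) := by
    intro n
    have := hpow (n : ℤ)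
    rwa [zpow_natCast] at this
  have hr1 : 1 ≤ r := by omega
  have h2rt : (2 * (r:ℝ)) * t = Real.pi := by
    rw [ht]; field_simp
  -- first factor
  have h1 : A ^ (-4 : ℤ) - A ^ (2 * (r - 1)) =
      Complex.exp (((-3 * t : ℝ) : ℂ) * Complex.I) * (2 * (Real.cos t : ℂ)) := by
    have hcast : ((2 * (r - 1) : ℕ) : ℝ) * t = Real.pi + (-2 * t) := by
      rw [← h2rt]
      push_cast [Nat.cast_sub hr1]
      ring
    rw [hpow (-4), hpown (2 * (r - 1)), hcast]
    have eA : (((-4 : ℤ) * t : ℝ) : ℂ) * Complex.I =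
        ((-3 * t : ℝ) : ℂ) * Complex.I + ((-t : ℝ) : ℂ) * Complex.I := by
      push_cast; ring
    have eB : ((Real.pi + -2 * t : ℝ) : ℂ) * Complex.I =
        (Real.pi : ℂ) * Complex.I + (((-3 * t : ℝ) : ℂ) * Complex.I + ((t : ℝ) : ℂ) * Complex.I) := by
      push_cast; ring
    rw [eA, eB, Complex.exp_add, Complex.exp_add, Complex.exp_add, Complex.exp_pi_mul_I,
      ← exp_add_exp_neg t]
    ring
  -- second factor
  have h2 : A ^ 2 - A ^ (-2 : ℤ) = 2 * Complex.I * (Real.sin (2 * t) : ℂ) := by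
    rw [show A ^ 2 = A ^ (2:ℤ) from (zpow_natCast A 2).symm, hpow 2, hpow (-2)]
    have : (((-2 : ℤ) * t : ℝ) : ℂ) * Complex.I = ((-(2*t) : ℝ) : ℂ) * Complex.I := by
      push_cast; ring
    rw [this, show (((2:ℤ) * t : ℝ) : ℂ) * Complex.I = ((2*t : ℝ) : ℂ) * Complex.I by push_cast; ring,
      exp_sub_exp_neg (2*t)]
  have hcos_pos : 0 < Real.cos t := Real.cos_pos_of_mem_Ioo ⟨by linarith, htlt⟩
  have h2t : 2 * t = Real.pi / r := by
    rw [ht]; field_simp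
  have hsin_pos : 0 < Real.sin (Real.pi / r) := by
    apply Real.sin_pos_of_pos_of_lt_pi (by positivity)
    rw [div_lt_iff₀ hr0]
    nlinarith [Real.pi_pos, hr5]
  have habs1 : ‖A ^ (-4 : ℤ) - A ^ (2 * (r - 1))‖ = 2 * Real.cos t := by
    rw [h1, norm_mul, Complex.norm_exp_ofReal_mul_I, one_mul, norm_mul, Complex.norm_real, Real.norm_eq_abs,
      abs_of_nonneg hcos_pos.le]
    norm_num
  have habs2 : ‖A ^ 2 - A ^ (-2 : ℤ)‖ = 2 * Real.sin (Real.pi / r) := by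
    rw [h2, h2t, norm_mul, norm_mul, Complex.norm_I, Complex.norm_real, Real.norm_eq_abs,
      abs_of_nonneg hsin_pos.le]
    norm_num
  have hsqrt : Real.sqrt r > 0 := Real.sqrt_pos.mpr hr0
  rw [hx, hμ, norm_mul, norm_mul, habs1, habs2, norm_pow, Complex.norm_I, one_pow, mul_one,
    Complex.norm_real, Real.norm_eq_abs, abs_of_nonneg hsqrt.le]
  rw [ht]
  field_simp
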